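/- Suppose m ≡ 2 (mod 4) and m + 1 ≡ 0 (mod 3). Let j* be the n-tuple with j*_(n−1) = (m+1)/3 and all other entries 0. Then j* ∈ J, P(j*) ≠ 0, and for every j ∈ J with j ≠ j*, either P(j) = 0 or V(j) < V(j*). -/

import Mathlib

open Finset

/-- `s a` is the sum of the binary digits of `a`. -/
def sdig (a : ℕ) : ℕ := (Nat.digits 2 a).sum

/-- `carries a b` is the number of carries when adding `a` and `b` in base 2:
`c(a,b) = s(a) + s(b) - s(a+b)`. -/
def carries (a b : ℕ) : ℕ := sdig a + sdig b - sdig (a + b)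

/-- The generalized binomial coefficient `C_r(x) = x(x-1)⋯(x-r+1)/r!` (with `C_0(x) = 1`). -/
def genBinom (x : ℚ) (r : ℕ) : ℚ :=
  (∏ p ∈ Finset.range r, (x - p)) / (Nat.factorial r : ℚ)

/-- Membership in the index set `J`: here `j i` (for `i : Fin n`) is the paper's
`j_{i+1}`, so the defining relation `(2^n-1)j_1 + ⋯ + (2-1)j_n = m+1` becomes
`∑ k, (2^(n-k) - 1) * j k = m + 1`. -/
def inJ (n m : ℕ) (j : Fin n → ℕ) : Prop :=
  ∑ k : Fin n, (2 ^ (n - (k : ℕ)) - 1) * j k = m + 1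

/-- `α_j(k)`: for `K : Fin n`, `alphaF n m j K` is the paper's `α_j(K+1)`, i.e.
`m / 2^(n-K) - ∑_{I < K} 2^(K-I) j_{I+1}`. -/
def alphaF (n m : ℕ) (j : Fin n → ℕ) (K : Fin n) : ℚ :=
  (m : ℚ) / 2 ^ (n - (K : ℕ)) -
    ∑ I : Fin n, if (I : ℕ) < (K : ℕ) then 2 ^ ((K : ℕ) - (I : ℕ)) * (j I : ℚ) else 0

/-- `P(j) = ∏_{k=1}^n C_{j_k}(α_j(k))`. -/
def Pprod (n m : ℕ) (j : Fin n → ℕ) : ℚ :=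
  ∏ k : Fin n, genBinom (alphaF n m j k) (j k)

/-- `V(j) = -ν(P(j))`, where `ν` is the 2-adic valuation on `ℚ`. -/
def V (n m : ℕ) (j : Fin n → ℕ) : ℤ := - padicValRat 2 (Pprod n m j)

lemma sdig_zero : sdig 0 = 0 := by simp [sdig]

lemma sdig_rec' (n : ℕ) : sdig n = n % 2 + sdig (n/2) := by
  rcases Nat.eq_zero_or_pos n with h | h
  · subst h; simp [sdig]
  · unfold sdig
    rw [Nat.digits_def' (by norm_num : 1 < 2) h]
    simp

lemma sdig_le (n : ℕ) : sdig n ≤ n := Nat.digit_sum_le 2 n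

lemma sdig_add3 : ∀ N x y c, x + y + c = N → c ≤ 1 → sdig (x + y + c) ≤ sdig x + sdig y + c := by
  intro N
  induction N using Nat.strong_induction_on with
  | _ N IH =>
    intro x y c hN hc
    rcases Nat.eq_zero_or_pos N with h0 | hpos
    · have hx : x = 0 := by omega
      have hy : y = 0 := by omega
      have hcc : c = 0 := by omega
      subst hx; subst hy; subst hcc; simp [sdig_zero]
    · have hx' := sdig_rec' x
      have hy' := sdig_rec' y
      have hz' := sdig_rec' (x + y + c)
      have hbit : (x + y + c) % 2 = (x % 2 + y % 2 + c) % 2 := by omega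
      have hdiv : (x + y + c) / 2 = x / 2 + y / 2 + (x % 2 + y % 2 + c) / 2 := by omega
      have hlt : x / 2 + y / 2 + (x % 2 + y % 2 + c) / 2 < N := by omega
      have hrec := IH _ hlt (x/2) (y/2) ((x % 2 + y % 2 + c) / 2) rfl (by omega)
      rw [hbit, hdiv] at hz'
      omega

lemma sdig_add_le (x y : ℕ) : sdig (x + y) ≤ sdig x + sdig y := by
  have := sdig_add3 (x + y + 0) x y 0 rfl (by norm_num)
  simpa using this

lemma sdig_sub_le (q u : ℕ) (h : u ≤ q) : sdig q ≤ sdig (q - u) + sdig u := by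
  have := sdig_add_le (q - u) u
  have h' : q - u + u = q := by omega
  rwa [h'] at this

lemma pow_ineq1 : ∀ t, 4 ≤ t → 3 * t + 4 ≤ 2 ^ t := by
  intro t ht
  induction t with
  | zero => omega
  | succ k IH =>
    rcases Nat.lt_or_ge k 4 with h | h
    · have : k = 3 := by omega
      subst this; norm_num
    · have h1 := IH (by omega)
      have h2 : (16:ℕ) ≤ 2^k := by
        calc (16:ℕ) = 2^4 := by norm_num
        _ ≤ 2^k := Nat.pow_le_pow_right (by norm_num) h
      rw [pow_succ]; omega

lemma pow_ineq2 : ∀ t, 5 ≤ t → 3 * t + 5 ≤ 2 ^ t := by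
  intro t ht
  induction t with
  | zero => omega
  | succ k IH =>
    rcases Nat.lt_or_ge k 5 with h | h
    · have : k = 4 := by omega
      subst this; norm_num
    · have h1 := IH (by omega)
      have h2 : (32:ℕ) ≤ 2^k := by
        calc (32:ℕ) = 2^5 := by norm_num
        _ ≤ 2^k := Nat.pow_le_pow_right (by norm_num) h
      rw [pow_succ]; omega

lemma sdig7 : sdig 7 = 3 := by norm_num [sdig]
lemma sdig5 : sdig 5 = 2 := by norm_num [sdig]
lemma sdig3 : sdig 3 = 2 := by norm_num [sdig]

lemma key3 : ∀ q, 1 ≤ q → ∀ k c, 7 * k + c = 3 * q → 3 * k + sdig q + 1 ≤ 2 * q := by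
  intro q
  induction q using Nat.strong_induction_on with
  | _ q IH =>
    intro hq k c hsum
    rcases Nat.lt_or_ge k 3 with hk | hk
    · interval_cases k
      · have := sdig_le q; omega
      · rcases Nat.lt_or_ge q 4 with h3 | h3
        · have : q = 3 := by omega
          subst this; have hs3 := sdig3; omega
        · have hrec := IH (q - 3) (by omega) (by omega) 0 (c - 2) (by omega)
          have hsub := sdig_sub_le q 3 (by omega)
          have hs3 := sdig3; omega
      · rcases Nat.lt_or_ge q 6 with h5 | h5
        · have : q = 5 := by omega
          subst this; have hs5 := sdig5; omega
        · have hrec := IH (q - 5) (by omega) (by omega) 0 (c - 1) (by omega)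
          have hsub := sdig_sub_le q 5 (by omega)
          have hs5 := sdig5; omega
    · rcases Nat.lt_or_ge q 8 with h7 | h7
      · have hq7 : q = 7 := by omega
        have hk3 : k = 3 := by omega
        subst hq7; subst hk3; have hs7 := sdig7; omega
      · have hrec := IH (q - 7) (by omega) (by omega) (k - 3) c (by omega)
        have hsub := sdig_sub_le q 7 (by omega)
        have hs7 := sdig7; omega

lemma keyMain : ∀ N q (a : ℕ → ℕ) b, 1 ≤ q →
    (∑ t ∈ Ico 3 N, (2^t - 1) * a t) + b = 3 * q →
    (∑ t ∈ Ico 3 N, t * a t) + sdig q + 1 ≤ 2 * q := by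
  intro N
  induction N with
  | zero =>
    intro q a b hq hsum
    simp only [show Ico 3 0 = ∅ from rfl, sum_empty] at hsum ⊢
    have := key3 q hq 0 b (by omega)
    omega
  | succ N IH =>
    intro q a b hq hsum
    rcases Nat.lt_or_ge N 3 with hN3 | hN3
    · -- Ico 3 (N+1) ⊆ {3}
      rcases Nat.lt_or_ge N 2 with hN2 | hN2
      · have he : Ico 3 (N+1) = ∅ := Ico_eq_empty (by omega)
        rw [he, sum_empty] at hsum ⊢
        have := key3 q hq 0 b (by omega)
        omega
      · have hNeq : N = 2 := by omega
        subst hNeq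
        have he : Ico 3 (2+1) = ∅ := Ico_self 3
        rw [he, sum_empty] at hsum ⊢
        have := key3 q hq 0 b (by omega)
        omega
    rcases Nat.lt_or_ge N 4 with hN4 | hN4
    · -- N = 3 : Ico 3 4 = {3}
      have hNeq : N = 3 := by omega
      subst hNeq
      have he : Ico 3 4 = {3} := rfl
      rw [he, sum_singleton] at hsum ⊢
      have := key3 q hq (a 3) b (by omega)
      omega
    · -- N ≥ 4: peel top index N
      rw [sum_Ico_succ_top (by omega : 3 ≤ N)] at hsum
      rw [sum_Ico_succ_top (by omega : 3 ≤ N)]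
      set X := ∑ t ∈ Ico 3 N, (2^t - 1) * a t with hX
      set TS := ∑ t ∈ Ico 3 N, t * a t with hTS
      set A := a N with hA
      rcases Nat.eq_zero_or_pos A with hA0 | hA1
      · rw [hA0] at hsum ⊢
        simp only [mul_zero, add_zero] at hsum ⊢
        exact IH q a b hq hsum
      rcases Nat.even_or_odd N with hpar | hpar
      · -- N even ≥ 4
        obtain ⟨s, hs⟩ := hpar
        have hpow : 2^N = 4^s := by
          rw [show N = 2 * s by omega, pow_mul]; norm_num
        have hdvd : 3 ∣ 2^N - 1 := by
          rw [hpow]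
          have := Nat.sub_dvd_pow_sub_pow 4 1 s
          simpa using this
        obtain ⟨u, hu⟩ := hdvd
        have hNu : N + 1 ≤ u := by
          have h1 := pow_ineq1 N (by omega)
          have h2 : (1:ℕ) ≤ 2^N := Nat.one_le_two_pow
          omega
        have hwA : (2^N - 1) * A = 3 * (u * A) := by
          rw [hu]; ring
        have huAq : u * A ≤ q := by
          have h2 : (1:ℕ) ≤ 2^N := Nat.one_le_two_pow
          omega
        have hNA : N * A + A = (N+1) * A := by ring
        have hNA2 : (N + 1) * A ≤ u * A := Nat.mul_le_mul_right A hNu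
        rcases Nat.eq_zero_or_pos (q - u * A) with hq0 | hq1
        · -- everything else is zero
          have hX0 : X = 0 := by omega
          have hb0 : b = 0 := by omega
          have hX0' : ∑ t ∈ Ico 3 N, (2^t - 1) * a t = 0 := by rw [← hX]; exact hX0
          have hTS0 : TS = 0 := by
            rw [hTS]
            apply sum_eq_zero
            intro t ht
            have ht' : (2^t - 1) * a t = 0 := (Finset.sum_eq_zero_iff.mp hX0') t ht
            have h1 : (1:ℕ) ≤ 2^t := Nat.one_le_two_pow
            have hat : a t = 0 := by
              have ht3 : 3 ≤ t := (mem_Ico.mp ht).1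
              have h8 : 2^3 ≤ 2^t := Nat.pow_le_pow_right (by norm_num) ht3
              rcases Nat.mul_eq_zero.mp ht' with h | h
              · norm_num at h8; omega
              · exact h
            rw [hat, mul_zero]
          have hsd := sdig_le q
          have hsd2 := sdig_le (u * A)
          have hquA : q = u * A := by omega
          rw [hquA, hTS0]
          omega
        · have hq' : X + b = 3 * (q - u * A) := by omega
          have hrec := IH (q - u * A) a b hq1 hq'
          have hsub := sdig_sub_le q (u * A) huAq
          have hsd2 := sdig_le (u * A)
          omega
      · -- N odd ≥ 5
        obtain ⟨s, hs⟩ := hpar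
        have hpow : 2^(N-1) = 4^s := by
          rw [show N - 1 = 2 * s by omega, pow_mul]; norm_num
        have hdvd : 3 ∣ 2^(N-1) - 1 := by
          rw [hpow]
          have := Nat.sub_dvd_pow_sub_pow 4 1 s
          simpa using this
        obtain ⟨w, hw⟩ := hdvd
        -- v = (2^N - 2)/3 = 2w
        have hpow2 : 2^N = 2 * 2^(N-1) := by
          rw [← pow_succ']
          congr 1
          omega
        have h2N1 : (1:ℕ) ≤ 2^(N-1) := Nat.one_le_two_pow
        have hv : 2^N - 2 = 3 * (2 * w) := by omega
        have hNv : N + 1 ≤ 2 * w := by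
          have h1 := pow_ineq2 N (by omega)
          omega
        have hwA : (2^N - 1) * A = 3 * ((2*w) * A) + A := by
          have h2 : 2^N - 1 = 3 * (2*w) + 1 := by omega
          rw [h2]; ring
        have hvAq : (2*w) * A ≤ q := by omega
        have hq1 : 1 ≤ q - (2*w) * A := by omega
        have hq' : X + (b + A) = 3 * (q - (2*w) * A) := by omega
        have hrec := IH (q - (2*w) * A) a (b + A) hq1 hq'
        have hsub := sdig_sub_le q ((2*w) * A) hvAq
        have hsd2 := sdig_le ((2*w) * A)
        have hNA : N * A + A = (N+1) * A := by ring
        have hNA2 : (N + 1) * A ≤ (2*w) * A := Nat.mul_le_mul_right A hNv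
        omega

lemma keyFull (n r : ℕ) (hn : 2 ≤ n) (hr : 1 ≤ r) (a : ℕ → ℕ) (b : ℕ)
    (hsum : (∑ t ∈ Ico 2 (n+1), (2^t - 1) * a t) + b = 3 * r)
    (hne : ¬ (b = 0 ∧ a 2 = r ∧ ∀ t ∈ Ico 3 (n+1), a t = 0)) :
    (∑ t ∈ Ico 2 (n+1), t * a t) + sdig r + 1 ≤ 2 * r + sdig (a 2) := by
  rw [sum_eq_sum_Ico_succ_bot (by omega : 2 < n + 1)] at hsum ⊢
  norm_num at hsum ⊢
  set X := ∑ t ∈ Ico 3 (n+1), (2^t - 1) * a t with hX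
  have ha2r : 3 * a 2 ≤ 3 * r := by omega
  set q := r - a 2 with hq
  have hq3 : X + b = 3 * q := by omega
  rcases Nat.eq_zero_or_pos q with hq0 | hq1
  · exfalso
    apply hne
    have hX0 : X = 0 := by omega
    have hb0 : b = 0 := by omega
    have hX0' : ∑ t ∈ Ico 3 (n+1), (2^t - 1) * a t = 0 := by rw [← hX]; exact hX0
    refine ⟨hb0, by omega, ?_⟩
    intro t ht
    have ht' : (2^t - 1) * a t = 0 := (Finset.sum_eq_zero_iff.mp hX0') t ht
    have ht3 : 3 ≤ t := (mem_Ico.mp ht).1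
    have h8 : 2^3 ≤ 2^t := Nat.pow_le_pow_right (by norm_num) ht3
    rcases Nat.mul_eq_zero.mp ht' with h | h
    · norm_num at h8; omega
    · exact h
  · have hmain := keyMain (n+1) q a b hq1 hq3
    have hsub : sdig r ≤ sdig (a 2) + sdig q := by
      have h1 := sdig_add_le (a 2) q
      have h2 : a 2 + q = r := by omega
      rwa [h2] at h1
    omega

lemma factorial_val (r : ℕ) : padicValNat 2 (Nat.factorial r) = r - sdig r := by
  have := sub_one_mul_padicValNat_factorial (p := 2) r
  simpa [sdig] using this

lemma padicValRat_prod {ι : Type*} (s : Finset ι) (f : ι → ℚ) (h : ∀ i ∈ s, f i ≠ 0) :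
    padicValRat 2 (∏ i ∈ s, f i) = ∑ i ∈ s, padicValRat 2 (f i) := by
  induction s using Finset.cons_induction with
  | empty => simp
  | cons i s hi IH =>
    rw [prod_cons, sum_cons,
      padicValRat.mul (h i (mem_cons_self i s))
        (prod_ne_zero_iff.mpr fun j hj => h j (mem_cons_of_mem hj)),
      IH fun j hj => h j (mem_cons_of_mem hj)]

lemma padicValNat_mod4 (w : ℕ) (h : w % 4 = 2) : padicValNat 2 w = 1 := by
  have h2 : w = 2 * (w/2) := by omega
  have ho : ¬ (2 ∣ w/2) := by omega
  rw [h2, padicValNat.mul (by norm_num) (by omega),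
    padicValNat.eq_zero_of_not_dvd ho, padicValNat_self]

lemma val_factor (m : ℕ) (hm : m % 4 = 2) (e : ℕ) (he : 2 ≤ e) (c : ℚ) (hc : ∃ cz : ℤ, c = cz) :
    ((m:ℚ)/2^e - c ≠ 0) ∧ padicValRat 2 ((m:ℚ)/2^e - c) = 1 - e := by
  obtain ⟨cz, rfl⟩ := hc
  set num : ℤ := (m:ℤ) - 2^e * cz with hnum
  have h4 : (4:ℤ) ∣ 2^e * cz := by
    apply dvd_mul_of_dvd_left
    have : (2:ℤ)^e = 2^2 * 2^(e-2) := by rw [← pow_add]; congr 1; omega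
    rw [this]; norm_num
  have hmz : (m:ℤ) % 4 = 2 := by omega
  have hnum4 : num % 4 = 2 := by omega
  have hnum0 : num ≠ 0 := by omega
  have h2e : ((2:ℚ))^e ≠ 0 := pow_ne_zero _ two_ne_zero
  have hxeq : (m:ℚ)/2^e - cz = (num : ℚ) / (((2^e : ℕ) : ℤ) : ℚ) := by
    push_cast
    field_simp
    rw [hnum]
    push_cast
    ring
  have hden : (((2^e : ℕ) : ℤ) : ℚ) ≠ 0 := by push_cast; exact h2e
  have hnumq : (num : ℚ) ≠ 0 := Int.cast_ne_zero.mpr hnum0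
  constructor
  · rw [hxeq]; exact div_ne_zero hnumq hden
  · rw [hxeq, padicValRat.div hnumq hden]
    have h1 : padicValRat 2 (num : ℚ) = 1 := by
      rw [padicValRat.of_int]
      have : num.natAbs % 4 = 2 := by omega
      simp only [padicValInt]
      rw [padicValNat_mod4 _ this]
      norm_num
    have h2 : padicValRat 2 ((((2^e : ℕ) : ℤ)) : ℚ) = e := by
      rw [padicValRat.of_int]
      simp [padicValInt, Int.natAbs_pow, padicValNat.prime_pow]
    rw [h1, h2]

lemma genBinom_val (x : ℚ) (r : ℕ) (v : ℤ)
    (h : ∀ p : ℕ, p < r → (x - p ≠ 0 ∧ padicValRat 2 (x - p) = v)) :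
    genBinom x r ≠ 0 ∧ padicValRat 2 (genBinom x r) = r * v - ((r:ℤ) - sdig r) := by
  have hprodne : (∏ p ∈ range r, (x - p)) ≠ 0 :=
    prod_ne_zero_iff.mpr fun p hp => (h p (mem_range.mp hp)).1
  have hfacne : ((Nat.factorial r : ℕ) : ℚ) ≠ 0 := by
    exact_mod_cast (Nat.factorial_pos r).ne'
  constructor
  · exact div_ne_zero hprodne hfacne
  · rw [genBinom, padicValRat.div hprodne hfacne,
      padicValRat_prod _ _ (fun p hp => (h p (mem_range.mp hp)).1)]
    have hsum : ∑ p ∈ range r, padicValRat 2 (x - p) = r * v := by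
      rw [Finset.sum_congr rfl (fun p hp => (h p (mem_range.mp hp)).2)]
      simp [mul_comm]
    have hfv : padicValRat 2 ((Nat.factorial r : ℕ) : ℚ) = ((r:ℤ) - sdig r) := by
      rw [padicValRat.of_nat, factorial_val]
      have := sdig_le r
      push_cast [Nat.cast_sub this]
      ring
    rw [hsum, hfv]

lemma genBinom_int (z : ℤ) (r : ℕ) : ∃ w : ℤ, genBinom (z:ℚ) r = w := by
  rcases le_or_gt 0 z with hz | hz
  · lift z to ℕ using hz with zn
    rcases Nat.lt_or_ge zn r with hlt | hge
    · refine ⟨0, ?_⟩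
      rw [genBinom, Finset.prod_eq_zero (mem_range.mpr hlt) (by push_cast; ring)]
      simp
    · obtain ⟨w, hw⟩ := Nat.factorial_dvd_descFactorial zn r
      refine ⟨w, ?_⟩
      have hprod : (∏ p ∈ range r, ((zn:ℚ) - p)) = (zn.descFactorial r : ℚ) := by
        rw [Nat.descFactorial_eq_prod_range]
        push_cast
        apply Finset.prod_congr rfl
        intro i hi
        have : i ≤ zn := by have := mem_range.mp hi; omega
        push_cast [Nat.cast_sub this]
        ring
      rw [genBinom]
      push_cast
      rw [hprod, hw]
      push_cast
      rw [mul_comm, mul_div_assoc, div_self (by exact_mod_cast (Nat.factorial_pos r).ne'), mul_one]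
  · set k := (-z).toNat with hk
    have hzk : (z:ℚ) = -(k:ℚ) := by
      have : (k:ℤ) = -z := Int.toNat_of_nonneg (by omega)
      have h2 : ((k:ℤ):ℚ) = ((-z : ℤ):ℚ) := by rw [this]
      push_cast at h2
      linarith
    have hk1 : 1 ≤ k := by omega
    obtain ⟨w, hw⟩ := Nat.factorial_dvd_descFactorial (k + r - 1) r
    refine ⟨(-1)^r * w, ?_⟩
    have hprod : (∏ p ∈ range r, ((z:ℚ) - p)) = (-1)^r * ((k + r - 1).descFactorial r : ℚ) := by
      have h1 : ∀ p ∈ range r, (z:ℚ) - p = (-1) * ((k:ℚ) + p) := by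
        intro p hp; rw [hzk]; ring
      rw [Finset.prod_congr rfl h1, Finset.prod_mul_distrib, Finset.prod_const,
        Finset.card_range]
      congr 1
      rw [Nat.descFactorial_eq_prod_range]
      rw [← Finset.prod_range_reflect]
      push_cast
      apply Finset.prod_congr rfl
      intro i hi
      have hir : i < r := mem_range.mp hi
      have h3 : k + (r - 1 - i) = k + r - 1 - i := by omega
      exact_mod_cast congrArg (fun x : ℕ => (x : ℚ)) h3
    rw [genBinom, hprod, hw]
    push_cast
    have hf : ((Nat.factorial r : ℕ) : ℚ) ≠ 0 := by exact_mod_cast (Nat.factorial_pos r).ne'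
    field_simp

lemma genBinom_zero (x : ℚ) : genBinom x 0 = 1 := by simp [genBinom]

def SK (n : ℕ) (j : Fin n → ℕ) (K : Fin n) : ℕ :=
  ∑ I : Fin n, if (I : ℕ) < (K : ℕ) then 2 ^ ((K : ℕ) - (I : ℕ)) * j I else 0

lemma alphaF_decomp (n m : ℕ) (j : Fin n → ℕ) (K : Fin n) :
    alphaF n m j K = (m:ℚ)/2^(n-(K:ℕ)) - ((SK n j K : ℕ) : ℚ) := by
  unfold alphaF SK
  congr 1
  push_cast
  rfl

lemma factor_val (n m : ℕ) (hm : m % 4 = 2) (j : Fin n → ℕ) (K : Fin n)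
    (hK : (K:ℕ) + 2 ≤ n) :
    genBinom (alphaF n m j K) (j K) ≠ 0 ∧
    padicValRat 2 (genBinom (alphaF n m j K) (j K)) =
      (sdig (j K) : ℤ) - ((n - (K:ℕ) : ℕ) : ℤ) * (j K : ℤ) := by
  set e := n - (K:ℕ) with hee
  have he : 2 ≤ e := by omega
  have hval : ∀ p : ℕ, p < j K →
      (alphaF n m j K - p ≠ 0 ∧ padicValRat 2 (alphaF n m j K - p) = 1 - e) := by
    intro p _
    have hre : alphaF n m j K - p = (m:ℚ)/2^e - ((SK n j K : ℚ) + p) := by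
      rw [alphaF_decomp]; ring
    rw [hre]
    exact val_factor m hm e he _ ⟨(SK n j K : ℤ) + p, by push_cast; ring⟩
  obtain ⟨h1, h2⟩ := genBinom_val _ _ (1 - e) hval
  refine ⟨h1, ?_⟩
  rw [h2]; push_cast; ring

lemma last_val (n m : ℕ) (hm2 : m % 2 = 0) (j : Fin n → ℕ) (K : Fin n)
    (hK : (K:ℕ) + 1 = n) :
    ∃ w : ℤ, genBinom (alphaF n m j K) (j K) = (w : ℚ) := by
  have halpha : alphaF n m j K = (((m/2 : ℕ) : ℤ) - (SK n j K : ℤ) : ℤ) := by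
    rw [alphaF_decomp]
    have he : n - (K:ℕ) = 1 := by omega
    have hm' : (m:ℚ) = 2 * ((m/2 : ℕ) : ℚ) := by
      have h2 : m = 2 * (m/2) := by omega
      exact_mod_cast congrArg (fun x : ℕ => (x:ℚ)) h2
    rw [he, hm', Int.cast_sub, Int.cast_natCast, Int.cast_natCast]
    ring
  rw [halpha]
  exact genBinom_int _ _

lemma sum_reflect (g : ℕ → ℕ) : ∀ (n d : ℕ), d ≤ n →
    ∑ K ∈ range d, g (n - K) = ∑ t ∈ Ico (n - d + 1) (n + 1), g t := by
  intro n d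
  induction d with
  | zero => simp
  | succ d IH =>
    intro h
    rw [sum_range_succ, IH (by omega)]
    have hab : n - (d+1) + 1 < n + 1 := by omega
    rw [sum_eq_sum_Ico_succ_bot hab]
    have h1 : n - (d+1) + 1 + 1 = n - d + 1 := by omega
    have h2 : n - (d+1) + 1 = n - d := by omega
    rw [h1, h2]
    ring

/-- If `m ≡ 2 mod 4` and `m + 1 ≡ 0 mod 3`, then the tuple
`j* = (0, …, 0, (m+1)/3, 0)` lies in `J`, `P(j*) ≠ 0`, and every other `j ∈ J`
has `P(j) = 0` or `V(j) < V(j*)`. -/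
theorem stmt10 (n m : ℕ) (hn : 3 ≤ n) (hm : 1 ≤ m) (hmn : m ≤ 2 ^ (n + 1) - 3)
    (h4 : m % 4 = 2) (h3 : (m + 1) % 3 = 0)
    (jst : Fin n → ℕ)
    (hjst : jst = fun k : Fin n => if (k : ℕ) = n - 2 then (m + 1) / 3 else 0) :
    inJ n m jst ∧ Pprod n m jst ≠ 0 ∧
      ∀ j : Fin n → ℕ, inJ n m j → j ≠ jst →
        Pprod n m j = 0 ∨ V n m j < V n m jst := by
  obtain ⟨n', rfl⟩ : ∃ n', n = n' + 1 := ⟨n - 1, by omega⟩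
  have hn2 : 2 ≤ n' := by omega
  set r := (m + 1) / 3 with hrdef
  have hr3 : 3 * r = m + 1 := by omega
  have hr1 : 1 ≤ r := by omega
  set kst : Fin (n'+1) := ⟨n' - 1, by omega⟩ with hkst
  have hco : (kst : ℕ) = (n'+1) - 2 := by
    show n' - 1 = (n'+1) - 2
    omega
  have hjst_kst : jst kst = r := by
    rw [hjst]
    show (if (kst:ℕ) = (n'+1) - 2 then r else 0) = r
    rw [if_pos hco]
  have hjst_other : ∀ K : Fin (n'+1), K ≠ kst → jst K = 0 := by
    intro K hK
    rw [hjst]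
    show (if (K:ℕ) = (n'+1) - 2 then r else 0) = 0
    apply if_neg
    intro hc
    apply hK
    apply Fin.ext
    rw [hco]
    exact hc
  -- Part A : inJ
  have hinJ : inJ (n'+1) m jst := by
    show ∑ k : Fin (n'+1), (2 ^ ((n'+1) - (k : ℕ)) - 1) * jst k = m + 1
    have hstep : ∀ k : Fin (n'+1), (2 ^ ((n'+1) - (k:ℕ)) - 1) * jst k
        = if k = kst then m + 1 else 0 := by
      intro k
      by_cases hk : k = kst
      · subst hk
        rw [hjst_kst, if_pos rfl]
        have h1 : (n'+1) - (kst:ℕ) = 2 := by omega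
        rw [h1]
        norm_num
        omega
      · rw [hjst_other k hk, if_neg hk, mul_zero]
    rw [Finset.sum_congr rfl (fun k _ => hstep k), Finset.sum_ite_eq' univ kst,
      if_pos (mem_univ kst)]
  -- factor at kst for jst
  have hKkst : (kst:ℕ) + 2 ≤ n'+1 := by omega
  have hfac_kst := factor_val (n'+1) m h4 jst kst hKkst
  -- Part B : Pprod jst ≠ 0
  have hfacs_st : ∀ K ∈ (univ : Finset (Fin (n'+1))),
      genBinom (alphaF (n'+1) m jst K) (jst K) ≠ 0 := by
    intro K _
    by_cases hK : K = kst
    · subst hK; exact hfac_kst.1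
    · rw [hjst_other K hK, genBinom_zero]; exact one_ne_zero
  have hPst_ne : Pprod (n'+1) m jst ≠ 0 := by
    unfold Pprod
    rw [Finset.prod_ne_zero_iff]
    exact hfacs_st
  -- V jst
  have hVst : V (n'+1) m jst = 2 * (r:ℤ) - sdig r := by
    unfold V Pprod
    rw [padicValRat_prod _ _ hfacs_st]
    rw [Finset.sum_eq_single kst
      (fun K _ hK => by rw [hjst_other K hK, genBinom_zero]; exact padicValRat.one)
      (fun h => absurd (mem_univ kst) h)]
    rw [hfac_kst.2, hjst_kst]
    have h2 : ((n'+1) - (kst:ℕ) : ℕ) = 2 := by omega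
    rw [h2]
    push_cast
    ring
  refine ⟨hinJ, hPst_ne, ?_⟩
  -- Part C
  intro j hj hne
  by_cases hP : Pprod (n'+1) m j = 0
  · exact Or.inl hP
  right
  have hfac : ∀ K : Fin (n'+1), genBinom (alphaF (n'+1) m j K) (j K) ≠ 0 := by
    intro K hK0
    exact hP (Finset.prod_eq_zero (mem_univ K) hK0)
  -- j' and a
  set j' : ℕ → ℕ := fun i => if h : i < n'+1 then j ⟨i, h⟩ else 0 with hj'def
  set a : ℕ → ℕ := fun t => j' ((n'+1) - t) with hadef
  set b : ℕ := j' n' with hbdef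
  have hjj : ∀ K : Fin (n'+1), j K = j' (K:ℕ) := by
    intro K
    rw [hj'def]
    simp only [K.isLt, dif_pos]
  have hjcs : ∀ K : Fin n', j K.castSucc = j' (K:ℕ) := by
    intro K
    rw [hjj K.castSucc, Fin.coe_castSucc]
  -- valuation of Pprod j
  have hval : padicValRat 2 (Pprod (n'+1) m j)
      = ∑ K : Fin (n'+1), padicValRat 2 (genBinom (alphaF (n'+1) m j K) (j K)) :=
    padicValRat_prod _ _ (fun K _ => hfac K)
  rw [Fin.sum_univ_castSucc] at hval
  -- last factor
  obtain ⟨w, hw⟩ := last_val (n'+1) m (by omega) j (Fin.last n') (by simp [Fin.val_last])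
  have hwlast : 0 ≤ padicValRat 2
      (genBinom (alphaF (n'+1) m j (Fin.last n')) (j (Fin.last n'))) := by
    rw [hw, padicValRat.of_int]
    exact Int.natCast_nonneg _
  -- castSucc factors
  have hcs : ∀ K : Fin n',
      padicValRat 2 (genBinom (alphaF (n'+1) m j K.castSucc) (j K.castSucc)) =
      (sdig (j' (K:ℕ)) : ℤ) - (((n'+1) - (K:ℕ) : ℕ) : ℤ) * (j' (K:ℕ) : ℤ) := by
    intro K
    have hK2 : (K.castSucc : ℕ) + 2 ≤ n'+1 := by
      have := K.isLt
      simp only [Fin.coe_castSucc]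
      omega
    have h := (factor_val (n'+1) m h4 j K.castSucc hK2).2
    rw [h, hjcs K]
    simp only [Fin.coe_castSucc]
  rw [Finset.sum_congr rfl (fun K _ => hcs K)] at hval
  -- bound V j
  set TN : ℕ := ∑ K : Fin n', ((n'+1) - (K:ℕ)) * j' (K:ℕ) with hTN
  set K0 : Fin n' := ⟨n' - 1, by omega⟩ with hK0
  have hK0c : (K0 : ℕ) = n' - 1 := rfl
  have hjkst : j kst = j' (n' - 1) := by
    rw [hjj kst]
  have hbound : V (n'+1) m j ≤ (TN : ℤ) - (sdig (j' (n'-1)) : ℤ) := by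
    have hsplit : ∑ K : Fin n',
        ((sdig (j' (K:ℕ)) : ℤ) - (((n'+1) - (K:ℕ) : ℕ) : ℤ) * (j' (K:ℕ) : ℤ))
        = (∑ K : Fin n', (sdig (j' (K:ℕ)) : ℤ))
          - ∑ K : Fin n', (((n'+1) - (K:ℕ) : ℕ) : ℤ) * (j' (K:ℕ) : ℤ) :=
      Finset.sum_sub_distrib _ _
    have hTNc : (TN : ℤ) = ∑ K : Fin n', (((n'+1) - (K:ℕ) : ℕ) : ℤ) * (j' (K:ℕ) : ℤ) := by
      rw [hTN]
      push_cast
      rfl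
    have hsd : (sdig (j' (n'-1)) : ℤ) ≤ ∑ K : Fin n', (sdig (j' (K:ℕ)) : ℤ) := by
      have := Finset.single_le_sum
        (f := fun K : Fin n' => (sdig (j' (K:ℕ)) : ℤ))
        (fun K _ => Int.natCast_nonneg _) (mem_univ K0)
      simpa [hK0c] using this
    unfold V
    rw [hval, hsplit]
    omega
  -- reflect sums
  have hj2 : ∑ i ∈ range (n'+1), (2 ^ ((n'+1) - i) - 1) * j' i = m + 1 := by
    rw [← Fin.sum_univ_eq_sum_range (fun i => (2 ^ ((n'+1) - i) - 1) * j' i) (n'+1)]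
    rw [← (hj : ∑ K : Fin (n'+1), (2 ^ ((n'+1) - (K:ℕ)) - 1) * j K = m + 1)]
    exact Finset.sum_congr rfl (fun K _ => by rw [hjj K])
  rw [Finset.sum_range_succ] at hj2
  have hblast : (2 ^ ((n'+1) - n') - 1) * j' n' = b := by
    have h1 : (n'+1) - n' = 1 := by omega
    rw [h1, hbdef]
    norm_num
  rw [hblast] at hj2
  have hrefl1 : ∑ i ∈ range n', (2 ^ ((n'+1) - i) - 1) * j' i
      = ∑ t ∈ Ico 2 ((n'+1) + 1), (2 ^ t - 1) * a t := by
    have h1 : ∀ i ∈ range n', (2 ^ ((n'+1) - i) - 1) * j' i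
        = (fun t => (2 ^ t - 1) * a t) ((n'+1) - i) := by
      intro i hi
      have hi' : i < n' := mem_range.mp hi
      simp only [hadef]
      congr 1
      rw [show (n'+1) - ((n'+1) - i) = i from by omega]
    rw [Finset.sum_congr rfl h1, sum_reflect (fun t => (2 ^ t - 1) * a t) (n'+1) n' (by omega),
      show (n'+1) - n' + 1 = 2 from by omega]
  have hsum2 : (∑ t ∈ Ico 2 ((n'+1) + 1), (2 ^ t - 1) * a t) + b = 3 * r := by
    rw [← hrefl1]
    omega
  have hrefl2 : TN = ∑ t ∈ Ico 2 ((n'+1) + 1), t * a t := by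
    rw [hTN, Fin.sum_univ_eq_sum_range (fun i => ((n'+1) - i) * j' i) n']
    have h1 : ∀ i ∈ range n', ((n'+1) - i) * j' i
        = (fun t => t * a t) ((n'+1) - i) := by
      intro i hi
      have hi' : i < n' := mem_range.mp hi
      simp only [hadef]
      congr 1
      rw [show (n'+1) - ((n'+1) - i) = i from by omega]
    rw [Finset.sum_congr rfl h1, sum_reflect (fun t => t * a t) (n'+1) n' (by omega),
      show (n'+1) - n' + 1 = 2 from by omega]
  -- the nontriviality hypothesis
  have hne' : ¬ (b = 0 ∧ a 2 = r ∧ ∀ t ∈ Ico 3 ((n'+1) + 1), a t = 0) := by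
    rintro ⟨hb0, ha2, hall⟩
    apply hne
    funext K
    rw [hjst]
    show j K = if (K:ℕ) = (n'+1) - 2 then r else 0
    by_cases h1 : (K:ℕ) = (n'+1) - 2
    · rw [if_pos h1, hjj K, show (K:ℕ) = n' - 1 from by omega]
      have : a 2 = j' (n' - 1) := by
        rw [hadef]
        simp only
        rw [show (n'+1) - 2 = n' - 1 from by omega]
      rw [← this, ha2]
    · rw [if_neg h1, hjj K]
      by_cases h2 : (K:ℕ) = n'
      · rw [h2, ← hbdef, hb0]
      · have hK3 : (K:ℕ) < n' - 1 := by
          have := K.isLt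
          omega
        have ht : (n'+1) - (K:ℕ) ∈ Ico 3 ((n'+1) + 1) := by
          rw [mem_Ico]
          omega
        have := hall ((n'+1) - (K:ℕ)) ht
        rw [hadef] at this
        simp only at this
        rw [show (n'+1) - ((n'+1) - (K:ℕ)) = (K:ℕ) from by omega] at this
        exact this
  have ha2 : a 2 = j' (n' - 1) := by
    rw [hadef]
    simp only
    rw [show (n'+1) - 2 = n' - 1 from by omega]
  have hkey := keyFull (n'+1) r (by omega) hr1 a b hsum2 hne'
  rw [← hrefl2, ha2] at hkey
  rw [hVst]
  omega
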